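/- Let λ > 0 and let 0 ≤ n ≤ N−1 be integers. Then Σ_{j=n}^{N−1} (−1)^{j−n} C(N−1,j) C(j,n) B(1/(1+2λ), j+1) (λ/(1+2λ))^j = ((1+2λ)/λ)·C(N−1,n)·∫₀^{λ/(1+2λ)} u^n (1−u)^{N−n−1} (1 − ((1+2λ)/λ)u)^{−2λ/(1+2λ)} du, where the integral converges since the exponent −2λ/(1+2λ) lies in (−1,0). -/

import Mathlib

open Finset

/-- The Euler beta function `B(a,b) = ∫₀¹ t^(a-1) (1-t)^(b-1) dt`. -/
noncomputable def eulerBeta (a b : ℝ) : ℝ :=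
  ∫ t in (0 : ℝ)..1, t ^ (a - 1) * (1 - t) ^ (b - 1)

lemma beta_key_sum (M n : ℕ) (hn : n ≤ M) (x : ℝ) :
    ∑ j ∈ Finset.Icc n M, (-1 : ℝ) ^ (j - n) * (M.choose j) * (j.choose n) * x ^ j
      = (M.choose n : ℝ) * (x ^ n * (1 - x) ^ (M - n)) := by
  have hb : (1 - x) ^ (M - n) = ∑ k ∈ range (M - n + 1), (-x) ^ k * ((M - n).choose k : ℝ) := by
    rw [sub_eq_add_neg, add_comm, add_pow]
    simp
  rw [hb, Finset.mul_sum, Finset.mul_sum]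
  refine Finset.sum_nbij' (fun j => j - n) (fun k => n + k) ?_ ?_ ?_ ?_ ?_
  · intro j hj; simp only [mem_Icc] at hj; simp only [mem_range]; omega
  · intro k hk; simp only [mem_range] at hk; simp only [mem_Icc]; omega
  · intro j hj; simp only [mem_Icc] at hj; omega
  · intro k hk; simp only [mem_range] at hk; omega
  · intro j hj
    simp only [mem_Icc] at hj
    obtain ⟨h1, h2⟩ := hj
    have hcm : (M.choose j : ℝ) * (j.choose n) = (M.choose n) * ((M - n).choose (j - n)) := by
      exact_mod_cast congrArg (Nat.cast (R := ℝ)) (Nat.choose_mul h1 : M.choose j * j.choose n = M.choose n * (M - n).choose (j - n))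
    have hx : x ^ j = x ^ n * x ^ (j - n) := by rw [← pow_add]; congr 1; omega
    rw [hx, neg_pow]
    linear_combination ((-1 : ℝ) ^ (j - n) * x ^ n * x ^ (j - n)) * hcm

/-- Transformation of the alternating beta-function sum into an integral
(the Remark after Proposition `prop:recurrence solution`). -/
theorem beta_sum_integral_representation
    (lam : ℝ) (hlam : 0 < lam) (N n : ℕ) (hN : 1 ≤ N) (hn : n ≤ N - 1) :
    ∑ j ∈ Finset.Icc n (N - 1), (-1 : ℝ) ^ (j - n) * ((N - 1).choose j) * (j.choose n) *
        eulerBeta (1 / (1 + 2 * lam)) ((j : ℝ) + 1) * (lam / (1 + 2 * lam)) ^ j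
      = ((1 + 2 * lam) / lam) * ((N - 1).choose n) *
        ∫ u in (0 : ℝ)..(lam / (1 + 2 * lam)),
          u ^ n * (1 - u) ^ (N - n - 1) *
            (1 - ((1 + 2 * lam) / lam) * u) ^ (-(2 * lam / (1 + 2 * lam))) := by
  have h2l : (0 : ℝ) < 1 + 2 * lam := by linarith
  set a : ℝ := 1 / (1 + 2 * lam) with ha_def
  set c : ℝ := lam / (1 + 2 * lam) with hc_def
  have ha0 : 0 < a := by positivity
  have hc0 : 0 < c := by positivity
  have hcinv : c⁻¹ = (1 + 2 * lam) / lam := by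
    rw [hc_def, inv_div]
  have hexp : -(2 * lam / (1 + 2 * lam)) = a - 1 := by
    rw [ha_def]; field_simp; ring
  have hMn : N - n - 1 = N - 1 - n := by omega
  -- Step 1: rewrite eulerBeta with natural power
  have hbeta : ∀ j : ℕ, eulerBeta a ((j : ℝ) + 1)
      = ∫ t in (0 : ℝ)..1, t ^ (a - 1) * (1 - t) ^ j := by
    intro j
    unfold eulerBeta
    refine intervalIntegral.integral_congr fun t _ => ?_
    rw [add_sub_cancel_right, Real.rpow_natCast]
  -- integrability
  have hint : ∀ j : ℕ, IntervalIntegrable (fun t => t ^ (a - 1) * (1 - t) ^ j)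
      MeasureTheory.volume 0 1 := by
    intro j
    exact (intervalIntegral.intervalIntegrable_rpow' (by linarith)).mul_continuousOn
      (Continuous.continuousOn (by continuity))
  -- Step 2: sum = integral of sum
  have step2 : ∑ j ∈ Finset.Icc n (N - 1), (-1 : ℝ) ^ (j - n) * ((N - 1).choose j) *
        (j.choose n) * eulerBeta a ((j : ℝ) + 1) * c ^ j
      = ∫ t in (0 : ℝ)..1, ∑ j ∈ Finset.Icc n (N - 1),
          ((-1 : ℝ) ^ (j - n) * ((N - 1).choose j) * (j.choose n) * c ^ j) *
            (t ^ (a - 1) * (1 - t) ^ j) := by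
    rw [intervalIntegral.integral_finset_sum (fun j _ => (hint j).const_mul _)]
    refine Finset.sum_congr rfl fun j _ => ?_
    rw [intervalIntegral.integral_const_mul, hbeta j]
    ring
  -- Step 3: pointwise combinatorial identity
  have step3 : ∀ t : ℝ, ∑ j ∈ Finset.Icc n (N - 1),
        ((-1 : ℝ) ^ (j - n) * ((N - 1).choose j) * (j.choose n) * c ^ j) *
          (t ^ (a - 1) * (1 - t) ^ j)
      = ((N - 1).choose n : ℝ) *
          (t ^ (a - 1) * ((c * (1 - t)) ^ n * (1 - c * (1 - t)) ^ (N - 1 - n))) := by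
    intro t
    have hkey := beta_key_sum (N - 1) n hn (c * (1 - t))
    calc ∑ j ∈ Finset.Icc n (N - 1),
          ((-1 : ℝ) ^ (j - n) * ((N - 1).choose j) * (j.choose n) * c ^ j) *
            (t ^ (a - 1) * (1 - t) ^ j)
        = t ^ (a - 1) * ∑ j ∈ Finset.Icc n (N - 1),
            (-1 : ℝ) ^ (j - n) * ((N - 1).choose j) * (j.choose n) * (c * (1 - t)) ^ j := by
          rw [Finset.mul_sum]
          refine Finset.sum_congr rfl fun j _ => ?_
          rw [mul_pow]; ring
      _ = _ := by rw [hkey]; ring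
  -- Step 4: substitution in the integral on the RHS
  set g : ℝ → ℝ := fun u => u ^ n * (1 - u) ^ (N - n - 1) * (1 - c⁻¹ * u) ^ (a - 1) with hg_def
  have hsub : (∫ u in (0 : ℝ)..c, g u)
      = c * ∫ t in (0 : ℝ)..1, t ^ (a - 1) *
          ((c * (1 - t)) ^ n * (1 - c * (1 - t)) ^ (N - 1 - n)) := by
    have h1 : (∫ x in (0 : ℝ)..1, g (c * x)) = c⁻¹ • ∫ u in (0 : ℝ)..c, g u := by
      simpa using intervalIntegral.integral_comp_mul_left g (a := 0) (b := 1) (ne_of_gt hc0)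
    have h2 : (∫ u in (0 : ℝ)..c, g u) = c * ∫ x in (0 : ℝ)..1, g (c * x) := by
      rw [h1, smul_eq_mul, ← mul_assoc, mul_inv_cancel₀ (ne_of_gt hc0), one_mul]
    have h3 : (∫ x in (0 : ℝ)..1, g (c * x)) = ∫ t in (0 : ℝ)..1, g (c * (1 - t)) := by
      have := intervalIntegral.integral_comp_sub_left (fun x => g (c * x)) 1 (a := 0) (b := 1)
      simpa using this.symm
    rw [h2, h3]
    congr 1
    refine intervalIntegral.integral_congr fun t _ => ?_
    have : c⁻¹ * (c * (1 - t)) = 1 - t := by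
      rw [← mul_assoc, inv_mul_cancel₀ (ne_of_gt hc0), one_mul]
    simp only [hg_def, this, sub_sub_cancel, hMn]
    ring
  -- put everything together
  rw [show (1 / (1 + 2 * lam) : ℝ) = a from rfl] at *
  rw [step2, intervalIntegral.integral_congr fun t _ => step3 t,
    intervalIntegral.integral_const_mul]
  have hrhs : (∫ u in (0 : ℝ)..c, u ^ n * (1 - u) ^ (N - n - 1) *
        (1 - (1 + 2 * lam) / lam * u) ^ (-(2 * lam / (1 + 2 * lam))))
      = ∫ u in (0 : ℝ)..c, g u := by
    refine intervalIntegral.integral_congr fun u _ => ?_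
    rw [hg_def]
    simp only [hcinv, hexp]
  rw [hrhs, hsub, ← hcinv]
  field_simp
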